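/- Let D ∈ ℝ^{n×n} and S ∈ ℝ^{(n-p)×n} with rank S = n-p and ker S ⊆ ker D, and let D̂ = S D S⁺. Then exp(t D̂) = S exp(t D) S⁺ for all t ∈ ℝ. -/

import Mathlib

open Matrix

/-- The Moore–Penrose pseudo-inverse of a full-row-rank matrix: `S⁺ = Sᵀ(SSᵀ)⁻¹`. -/
noncomputable def moorePenrose {k n : ℕ} (S : Matrix (Fin k) (Fin n) ℝ) :
    Matrix (Fin n) (Fin k) ℝ :=
  Sᵀ * (S * Sᵀ)⁻¹

open Nat in
/-- If `rank S = n - p`, `ker S ⊆ ker D` and `D̂ = S D S⁺`, then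
`exp(t D̂) = S exp(t D) S⁺` for all real `t`. -/
theorem exp_pseudo_similar {n p : ℕ}
    (D : Matrix (Fin n) (Fin n) ℝ) (S : Matrix (Fin (n - p)) (Fin n) ℝ)
    (hrank : S.rank = n - p)
    (hker : ∀ v : Fin n → ℝ, S.mulVec v = 0 → D.mulVec v = 0) :
    ∀ t : ℝ,
      NormedSpace.exp (t • (S * D * moorePenrose S)) =
        S * NormedSpace.exp (t • D) * moorePenrose S := by
  set P := moorePenrose S with hPdef
  -- `S * Sᵀ` is invertible
  have hrank' : (S * Sᵀ).rank = n - p := by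
    rw [Matrix.rank_self_mul_transpose, hrank]
  have hunit : IsUnit (S * Sᵀ) := by
    rw [← Matrix.mulVec_surjective_iff_isUnit]
    have htop : LinearMap.range (S * Sᵀ).mulVecLin = ⊤ := by
      apply Submodule.eq_top_of_finrank_eq
      rw [← Matrix.rank, hrank']
      simp
    intro v
    have hv : v ∈ LinearMap.range (S * Sᵀ).mulVecLin := htop ▸ Submodule.mem_top
    obtain ⟨w, hw⟩ := hv
    exact ⟨w, hw⟩
  have hSP : S * P = 1 := by
    rw [hPdef, moorePenrose, ← Matrix.mul_assoc]
    exact Matrix.mul_nonsing_inv _ ((Matrix.isUnit_iff_isUnit_det _).mp hunit)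
  -- `D * (P * S) = D`
  have h1 : S * (1 - P * S) = 0 := by
    rw [Matrix.mul_sub, Matrix.mul_one, ← Matrix.mul_assoc, hSP, Matrix.one_mul, sub_self]
  have h2 : D * (1 - P * S) = 0 := by
    ext i j
    have hv : S.mulVec (fun k => (1 - P * S : Matrix (Fin n) (Fin n) ℝ) k j) = 0 := by
      funext i'
      have := congrFun (congrFun h1 i') j
      simpa [Matrix.mul_apply, Matrix.mulVec, dotProduct] using this
    have := congrFun (hker _ hv) i
    simpa [Matrix.mul_apply, Matrix.mulVec, dotProduct] using this
  have hD : D * (P * S) = D := by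
    have h3 := h2
    rw [Matrix.mul_sub, Matrix.mul_one, sub_eq_zero] at h3
    exact h3.symm
  have hD' : ∀ Y : Matrix (Fin n) (Fin (n - p)) ℝ, D * (P * (S * Y)) = D * Y := by
    intro Y
    rw [← Matrix.mul_assoc P S Y, ← Matrix.mul_assoc D (P * S) Y, hD]
  intro t
  -- powers
  have hpow : ∀ k : ℕ, (t • (S * D * P)) ^ k = S * (t • D) ^ k * P := by
    intro k
    induction k with
    | zero => simp [hSP]
    | succ k ih =>
      rw [pow_succ' (t • (S * D * P)) k, pow_succ' (t • D) k, ih]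
      simp only [Matrix.smul_mul, Matrix.mul_smul, smul_smul]
      congr 1
      simp only [Matrix.mul_assoc]
      congr 1
      exact hD' _
  -- set up norm instances to use exp lemmas
  letI : NormedAddCommGroup (Matrix (Fin n) (Fin n) ℝ) := Matrix.linftyOpNormedAddCommGroup
  letI : SeminormedRing (Matrix (Fin n) (Fin n) ℝ) := Matrix.linftyOpSemiNormedRing
  letI : NormedRing (Matrix (Fin n) (Fin n) ℝ) := Matrix.linftyOpNormedRing
  letI : NormedAlgebra ℝ (Matrix (Fin n) (Fin n) ℝ) := Matrix.linftyOpNormedAlgebra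
  have hsum : Summable fun k : ℕ => (k !⁻¹ : ℝ) • (t • D) ^ k :=
    NormedSpace.expSeries_summable' (𝕂 := ℝ) (t • D)
  -- the continuous linear map `A ↦ S * A * P`
  let L : Matrix (Fin n) (Fin n) ℝ →ₗ[ℝ] Matrix (Fin (n - p)) (Fin (n - p)) ℝ :=
    { toFun := fun A => S * A * P
      map_add' := fun A B => by
        show S * (A + B) * P = S * A * P + S * B * P
        rw [Matrix.mul_add, Matrix.add_mul]
      map_smul' := fun c A => by
        show S * (c • A) * P = c • (S * A * P)
        rw [Matrix.mul_smul, Matrix.smul_mul] }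
  have hLcont : Continuous L := L.continuous_of_finiteDimensional
  have hmap : (∑' k : ℕ, L ((k !⁻¹ : ℝ) • (t • D) ^ k)) =
      L (∑' k : ℕ, (k !⁻¹ : ℝ) • (t • D) ^ k) :=
    (hsum.hasSum.map L hLcont).tsum_eq
  rw [NormedSpace.exp_eq_tsum (𝕂 := ℝ), NormedSpace.exp_eq_tsum (𝕂 := ℝ)]
  show (∑' k : ℕ, (k !⁻¹ : ℝ) • (t • (S * D * P)) ^ k) =
      S * (∑' k : ℕ, (k !⁻¹ : ℝ) • (t • D) ^ k) * P
  rw [show S * (∑' k : ℕ, (k !⁻¹ : ℝ) • (t • D) ^ k) * P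
      = L (∑' k : ℕ, (k !⁻¹ : ℝ) • (t • D) ^ k) from rfl, ← hmap]
  congr 1
  funext k
  show (k !⁻¹ : ℝ) • (t • (S * D * P)) ^ k = S * ((k !⁻¹ : ℝ) • (t • D) ^ k) * P
  rw [hpow k, Matrix.mul_smul, Matrix.smul_mul]
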